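/- Let Λ be a generalised Bratteli diagram. (1) Suppose α ∈ Λ has two factorisations α = μgν and α = βhγ in which g and h are blue edges and the first coordinates of d(μ) and d(β) coincide. Then o(g) = o(h). (2) For every blue path β of length n with edge decomposition β = β₁β₂⋯βₙ (each βᵢ a blue edge), o(β) = lcm(o(β₁), o(β₂), …, o(βₙ)). -/

import Mathlib

open scoped ENNReal

/-- A rank-2 graph (`2`-graph): a countable category whose morphisms (paths) carry a
degree functor `d : Path → ℕ × ℕ` satisfying the unique factorisation property.
Vertices are identified with the paths of degree `(0,0)`; composition is a total
function whose behaviour is constrained only on composable pairs (`s p = r q`). -/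
structure TwoGraph where
  Path : Type
  countable : Countable Path
  d : Path → ℕ × ℕ
  r : Path → Path
  s : Path → Path
  comp : Path → Path → Path
  d_r : ∀ p, d (r p) = 0
  d_s : ∀ p, d (s p) = 0
  r_vertex : ∀ p, d p = 0 → r p = p
  s_vertex : ∀ p, d p = 0 → s p = p
  id_comp : ∀ p, comp (r p) p = p
  comp_id : ∀ p, comp p (s p) = p
  r_comp : ∀ p q, s p = r q → r (comp p q) = r p
  s_comp : ∀ p q, s p = r q → s (comp p q) = s q
  d_comp : ∀ p q, s p = r q → d (comp p q) = d p + d q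
  comp_assoc : ∀ p q t, s p = r q → s q = r t → comp (comp p q) t = comp p (comp q t)
  factor : ∀ (lam : Path) (m n : ℕ × ℕ), d lam = m + n →
    ∃! mn : Path × Path,
      d mn.1 = m ∧ d mn.2 = n ∧ s mn.1 = r mn.2 ∧ comp mn.1 mn.2 = lam

namespace TwoGraph

variable (G : TwoGraph)

/-- Vertices are the paths of degree `0`. -/
def IsVertex (p : G.Path) : Prop := G.d p = 0

/-- A blue path: one whose degree lies in `ℕ e₁`. -/
def IsBlue (p : G.Path) : Prop := (G.d p).2 = 0

/-- A red path: one whose degree lies in `ℕ e₂`. -/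
def IsRed (p : G.Path) : Prop := (G.d p).1 = 0

/-- A blue edge: a path of degree `e₁ = (1,0)`. -/
def IsBlueEdge (p : G.Path) : Prop := G.d p = (1, 0)

/-- A red edge: a path of degree `e₂ = (0,1)`. -/
def IsRedEdge (p : G.Path) : Prop := G.d p = (0, 1)

/-- `Λ` is row-finite: `vΛⁿ` is finite for every vertex `v` and degree `n`. -/
def RowFinite : Prop :=
  ∀ (v : G.Path) (n : ℕ × ℕ), G.IsVertex v →
    {p : G.Path | G.r p = v ∧ G.d p = n}.Finite

/-- `Λ` is a finite `2`-graph: `Λⁿ` is finite for every degree `n`. -/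
def FinitePaths : Prop := ∀ n : ℕ × ℕ, {p : G.Path | G.d p = n}.Finite

/-- `μ` is an initial segment of `lam`, i.e. `lam = μ ν` for some `ν`. -/
def InitSeg (μ lam : G.Path) : Prop := ∃ ν, G.s μ = G.r ν ∧ G.comp μ ν = lam

/-- `μ` is a final segment of `lam`, i.e. `lam = ν μ` for some `ν`. -/
def FinalSeg (μ lam : G.Path) : Prop := ∃ ν, G.s ν = G.r μ ∧ G.comp ν μ = lam

/-- The vertex `v` lies on the path `lam`, i.e. `v = lam(n)` for some `0 ≤ n ≤ d lam`. -/
def OnPath (lam v : G.Path) : Prop :=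
  G.IsVertex v ∧ ∃ μ, G.InitSeg μ lam ∧ G.s μ = v

/-- A cycle: `d lam ≠ 0`, `r lam = s lam`, and `lam(n) ≠ s lam` for `0 < n < d lam`. -/
def IsCycle (lam : G.Path) : Prop :=
  G.d lam ≠ 0 ∧ G.r lam = G.s lam ∧
    ∀ μ, G.InitSeg μ lam → G.d μ ≠ 0 → G.d μ ≠ G.d lam → G.s μ ≠ G.s lam

/-- `lam` has no entrance: for `n ≤ d lam`, every path of degree `n` with range `r lam`
is the initial segment `lam(0,n)`. -/
def HasNoEntrance (lam : G.Path) : Prop :=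
  ∀ n : ℕ × ℕ, n ≤ G.d lam → ∀ μ, G.d μ = n → G.r μ = G.r lam → G.InitSeg μ lam

/-- `lam` has no exit: for `n ≤ d lam`, every path of degree `n` with source `s lam`
is the final segment `lam(d lam - n, d lam)`. -/
def HasNoExit (lam : G.Path) : Prop :=
  ∀ n : ℕ × ℕ, n ≤ G.d lam → ∀ μ, G.d μ = n → G.s μ = G.s lam → G.FinalSeg μ lam

/-- An isolated cycle: no entrances and no exits. -/
def IsIsolated (lam : G.Path) : Prop := G.HasNoEntrance lam ∧ G.HasNoExit lam

/-- An isolated cycle in the red graph. -/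
def IsIsolatedRedCycle (lam : G.Path) : Prop :=
  G.IsRed lam ∧ G.IsCycle lam ∧ G.IsIsolated lam

/-- Condition (3.1): `Λ` is row-finite, the blue graph contains no cycles, and each
vertex is the range of an isolated cycle in the red graph. -/
def Cond31 : Prop :=
  G.RowFinite ∧ (∀ p, G.IsBlue p → ¬ G.IsCycle p) ∧
    ∀ v, G.IsVertex v → ∃ lam, G.IsIsolatedRedCycle lam ∧ G.r lam = v

/-- A source of the blue graph: a vertex receiving no blue edges. -/
def IsBlueSource (v : G.Path) : Prop :=
  G.IsVertex v ∧ ∀ e, G.IsBlueEdge e → G.r e ≠ v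

/-- A sink of the blue graph: a vertex emitting no blue edges. -/
def IsBlueSink (v : G.Path) : Prop :=
  G.IsVertex v ∧ ∀ e, G.IsBlueEdge e → G.s e ≠ v

/-- `Λ^{≤ n}`. -/
def LeSet (n : ℕ × ℕ) : Set G.Path :=
  {lam | G.d lam ≤ n ∧
    ∀ μ, G.s lam = G.r μ → G.comp lam μ ≠ lam → ¬ G.d (G.comp lam μ) ≤ n}

/-- `IsSwap ρ τ τ' ρ'` says that `(τ', ρ') = 𝓕(ρ, τ)` is the factorisation of `ρτ`
with the degrees in the reversed order: `τ'ρ' = ρτ`, `d τ' = d τ` and `d ρ' = d ρ`. -/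
def IsSwap (ρ τ τ' ρ' : G.Path) : Prop :=
  G.s ρ = G.r τ ∧ G.s τ' = G.r ρ' ∧ G.d τ' = G.d τ ∧ G.d ρ' = G.d ρ ∧
    G.comp τ' ρ' = G.comp ρ τ

/-- The edge `e` occurs at position `n` in the red path `μ`. -/
def OccAt (μ e : G.Path) (n : ℕ) : Prop :=
  ∃ ρ ξ, G.d ρ = (0, n) ∧ G.s ρ = G.r e ∧ G.s e = G.r ξ ∧
    G.comp ρ (G.comp e ξ) = μ

/-- `⟨μ, e⟩`: the number of occurrences of the red edge `e` in the red path `μ`. -/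
noncomputable def occCount (μ e : G.Path) : ℕ :=
  Nat.card {n : ℕ // G.OccAt μ e n}

/-- Membership in `Y = (blue Λ)S`: a blue path whose source is a source of the
blue graph. -/
def InY (α : G.Path) : Prop := G.IsBlue α ∧ G.IsBlueSource (G.s α)

/-- One step of the factorisation permutation `𝓕` of the blue paths of a GBD:
`α' = 𝓕(α)` iff `f α = α' f'` for (the) red edges `f, f'` with `s f = r α`. -/
def FStep (α α' : G.Path) : Prop :=
  G.IsBlue α ∧ G.IsBlue α' ∧
    ∃ f f', G.IsRedEdge f ∧ G.IsRedEdge f' ∧ G.s f = G.r α ∧ G.s α' = G.r f' ∧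
      G.comp f α = G.comp α' f'

end TwoGraph

/-- `k`-fold iteration of the factorisation permutation, as a relation. -/
def TwoGraph.FIter (G : TwoGraph) : ℕ → G.Path → G.Path → Prop
  | 0, α, α' => α = α'
  | k + 1, α, α' => ∃ β, G.FStep α β ∧ TwoGraph.FIter G k β α'

namespace TwoGraph

variable (G : TwoGraph)

/-- `o(α) = k`: `k` is the order of the blue path `α` under the factorisation
permutation `𝓕`. -/
def HasOrder (α : G.Path) (k : ℕ) : Prop :=
  0 < k ∧ G.FIter k α α ∧ ∀ m, 0 < m → m < k → ¬ G.FIter m α α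

end TwoGraph

/-- `IsChainComp [e₁, …, eₙ] β` says `β = e₁ e₂ ⋯ eₙ`. -/
def TwoGraph.IsChainComp (G : TwoGraph) : List G.Path → G.Path → Prop
  | [], β => G.IsVertex β
  | e :: l, β => ∃ γ, TwoGraph.IsChainComp G l γ ∧ G.s e = G.r γ ∧ β = G.comp e γ

/-- `cyclePow lam m = lam^m`, the `m`-fold concatenation of the cycle `lam`,
with `lam^0 = s lam`. -/
def TwoGraph.cyclePow (G : TwoGraph) (lam : G.Path) : ℕ → G.Path
  | 0 => G.s lam
  | m + 1 => G.comp lam (TwoGraph.cyclePow G lam m)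

namespace TwoGraph

variable (G : TwoGraph)

/-! ### Relative (sub-2-graph) versions of the basic notions -/

/-- `μ` is an initial segment of `lam` within `P`. -/
def InitSegIn (P : Set G.Path) (μ lam : G.Path) : Prop :=
  ∃ ν ∈ P, G.s μ = G.r ν ∧ G.comp μ ν = lam

/-- `μ` is a final segment of `lam` within `P`. -/
def FinalSegIn (P : Set G.Path) (μ lam : G.Path) : Prop :=
  ∃ ν ∈ P, G.s ν = G.r μ ∧ G.comp ν μ = lam

/-- A cycle of the sub-2-graph with path-set `P`. -/
def IsCycleIn (P : Set G.Path) (lam : G.Path) : Prop :=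
  lam ∈ P ∧ G.d lam ≠ 0 ∧ G.r lam = G.s lam ∧
    ∀ μ ∈ P, G.InitSegIn P μ lam → G.d μ ≠ 0 → G.d μ ≠ G.d lam → G.s μ ≠ G.s lam

def HasNoEntranceIn (P : Set G.Path) (lam : G.Path) : Prop :=
  ∀ n : ℕ × ℕ, n ≤ G.d lam → ∀ μ ∈ P, G.d μ = n → G.r μ = G.r lam → G.InitSegIn P μ lam

def HasNoExitIn (P : Set G.Path) (lam : G.Path) : Prop :=
  ∀ n : ℕ × ℕ, n ≤ G.d lam → ∀ μ ∈ P, G.d μ = n → G.s μ = G.s lam → G.FinalSegIn P μ lam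

/-- An isolated cycle of the red graph of the sub-2-graph with path-set `P`. -/
def IsIsolatedRedCycleIn (P : Set G.Path) (lam : G.Path) : Prop :=
  lam ∈ P ∧ G.IsRed lam ∧ G.IsCycleIn P lam ∧
    G.HasNoEntranceIn P lam ∧ G.HasNoExitIn P lam

def RowFiniteIn (P : Set G.Path) : Prop :=
  ∀ (v : G.Path) (n : ℕ × ℕ), G.IsVertex v →
    {p : G.Path | p ∈ P ∧ G.r p = v ∧ G.d p = n}.Finite

/-- A source of the blue graph of the sub-2-graph with path-set `P`. -/
def IsBlueSourceIn (P : Set G.Path) (v : G.Path) : Prop :=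
  v ∈ P ∧ G.IsVertex v ∧ ∀ e ∈ P, G.IsBlueEdge e → G.r e ≠ v

/-- Condition (3.1) for the sub-2-graph with path-set `P`. -/
def Cond31In (P : Set G.Path) : Prop :=
  G.RowFiniteIn P ∧ (∀ p ∈ P, G.IsBlue p → ¬ G.IsCycleIn P p) ∧
    ∀ v ∈ P, G.IsVertex v → ∃ lam, G.IsIsolatedRedCycleIn P lam ∧ G.r lam = v

/-- `Λ_j = {λ ∈ Λ : s(λ) Λ W ≠ ∅}`: the paths admitting a path from their source
into the vertex set `W`. -/
def subGraphTo (W : Set G.Path) : Set G.Path :=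
  {p | ∃ μ, G.r μ = G.s p ∧ G.s μ ∈ W}

/-- `Λ` has large-permutation factorisations. -/
def HasLPF : Prop :=
  ∀ v, G.IsVertex v → ∀ l : ℕ, 0 < l → ∃ N : ℕ,
    ∀ α, G.IsBlue α → G.r α = v → G.d α = (N, 0) →
      ∀ k, G.HasOrder α k → l < k

end TwoGraph

/-- A generalised Bratteli diagram of depth `N ∈ ℕ ∪ {∞}` with vertex decomposition
`Λ⁰ = ⊔ₙ V n`. -/
structure IsGBD (G : TwoGraph) (N : ℕ∞) (V : ℕ → Set G.Path) : Prop where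
  rowFinite : G.RowFinite
  level_nonempty : ∀ n : ℕ, (n : ℕ∞) ≤ N → (V n).Nonempty
  level_finite : ∀ n : ℕ, (V n).Finite
  level_empty : ∀ n : ℕ, ¬ ((n : ℕ∞) ≤ N) → V n = ∅
  level_vertex : ∀ n, V n ⊆ {v | G.IsVertex v}
  cover : ∀ v, G.IsVertex v → ∃ n, v ∈ V n
  level_disjoint : ∀ m n, m ≠ n → Disjoint (V m) (V n)
  blue_level : ∀ e, G.IsBlueEdge e → ∃ n, G.r e ∈ V n ∧ G.s e ∈ V (n + 1)
  sinks_bottom : ∀ v, G.IsBlueSink v → v ∈ V 0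
  sources_top : ∀ v, G.IsBlueSource v → ∃ n : ℕ, (n : ℕ∞) = N ∧ v ∈ V n
  red_cycle : ∀ v, G.IsVertex v → ∃ lam, G.IsIsolatedRedCycle lam ∧ G.r lam = v
  red_level : ∀ f, G.IsRedEdge f → ∃ n, G.r f ∈ V n ∧ G.s f ∈ V n

/-- The sub-2-graph `Λ_N` of paths joining vertices in the first `N` levels. -/
def levelPaths (G : TwoGraph) (V : ℕ → Set G.Path) (N : ℕ) : Set G.Path :=
  {p | (∃ n ≤ N, G.r p ∈ V n) ∧ (∃ n ≤ N, G.s p ∈ V n)}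

/-- An infinite path in a 2-graph: a degree-preserving functor `Ω₂ → Λ`, recorded by
its segments `x(m,n)` for `m ≤ n` in `ℕ × ℕ`. -/
structure InfPath (G : TwoGraph) where
  seg : ℕ × ℕ → ℕ × ℕ → G.Path
  deg : ∀ m n : ℕ × ℕ, m ≤ n → G.d (seg m n) = n - m
  range_seg : ∀ m n : ℕ × ℕ, m ≤ n → G.r (seg m n) = seg m m
  source_seg : ∀ m n : ℕ × ℕ, m ≤ n → G.s (seg m n) = seg n n
  comp_seg : ∀ m n p : ℕ × ℕ, m ≤ n → n ≤ p → G.comp (seg m n) (seg n p) = seg m p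

/-- A Cuntz–Krieger `Λ`-family in a C*-algebra `A`. -/
structure CKFamily (G : TwoGraph) (A : Type*) [CStarAlgebra A] where
  S : G.Path → A
  ck1_sa : ∀ v, G.IsVertex v → star (S v) = S v
  ck1_idem : ∀ v, G.IsVertex v → S v * S v = S v
  ck1_orth : ∀ v w, G.IsVertex v → G.IsVertex w → v ≠ w → S v * S w = 0
  ck2 : ∀ p q, G.s p = G.r q → S p * S q = S (G.comp p q)
  ck3 : ∀ p, star (S p) * S p = S (G.s p)
  ck4 : ∀ (v : G.Path) (n : ℕ × ℕ), G.IsVertex v →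
    S v = ∑ᶠ lam ∈ {lam : G.Path | lam ∈ G.LeSet n ∧ G.r lam = v},
      S lam * star (S lam)

section CStar

variable {A : Type*} [CStarAlgebra A]

/-- The C*-subalgebra (as a subset) of `A` generated by a set `SS`. -/
def generatedCStar (SS : Set A) : Set A :=
  closure (NonUnitalStarAlgebra.adjoin ℂ SS : Set A)

/-- `P` is full in the C*-algebra `Bset ⊆ A`: every closed two-sided ideal of `Bset`
containing `P` is all of `Bset`. -/
def FullIn (Bset : Set A) (P : A) : Prop :=
  ∀ I : Set A, I ⊆ Bset → IsClosed I →
    (∀ x ∈ I, ∀ y ∈ I, x + y ∈ I) → (∀ (c : ℂ), ∀ x ∈ I, c • x ∈ I) →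
    (∀ a ∈ Bset, ∀ x ∈ I, a * x ∈ I ∧ x * a ∈ I) →
    P ∈ I → Bset ⊆ I

/-- The sum `∑_{v ∈ Λ⁰} s_v`, which is the unit of `C*(Λ)` for finite `Λ`. -/
noncomputable def ckUnit (G : TwoGraph) (F : CKFamily G A) : A :=
  ∑ᶠ v ∈ {v : G.Path | G.IsVertex v}, F.S v

/-- The canonical unitary `U = ∑_{α ∈ Y} s_α s_{λ(α)} s_α*`. -/
noncomputable def ckU (G : TwoGraph) (F : CKFamily G A) (lam : G.Path → G.Path) : A :=
  ∑ᶠ α ∈ {α : G.Path | G.InY α}, F.S α * F.S (lam α) * star (F.S α)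

/-- The gauge action: for every `z ∈ 𝕋²` there is a *-automorphism `γ_z` of the
C*-subalgebra generated by the family with `γ_z(s_λ) = z^{d(λ)} s_λ`. -/
def GaugeInvariant (G : TwoGraph) (F : CKFamily G A) : Prop :=
  ∀ z₁ z₂ : ℂ, ‖z₁‖ = 1 → ‖z₂‖ = 1 → ∃ γ : A → A,
    Set.BijOn γ (generatedCStar (Set.range F.S)) (generatedCStar (Set.range F.S)) ∧
    (∀ x ∈ generatedCStar (Set.range F.S), ∀ y ∈ generatedCStar (Set.range F.S),
      γ (x + y) = γ x + γ y ∧ γ (x * y) = γ x * γ y) ∧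
    (∀ x ∈ generatedCStar (Set.range F.S), γ (star x) = star (γ x)) ∧
    (∀ (c : ℂ), ∀ x ∈ generatedCStar (Set.range F.S), γ (c • x) = c • γ x) ∧
    (∀ p : G.Path, γ (F.S p) = (z₁ ^ (G.d p).1 * z₂ ^ (G.d p).2) • F.S p)

end CStar

namespace TwoGraph

variable (G : TwoGraph)

/-- Unique factorisation, convenient form. -/
lemma fu {p q p' q' : G.Path} (h1 : G.s p = G.r q) (h2 : G.s p' = G.r q')
    (h3 : G.comp p q = G.comp p' q') (h4 : G.d p = G.d p') : p = p' ∧ q = q' := by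
  obtain ⟨mn, -, huniq⟩ := G.factor (G.comp p q) (G.d p) (G.d q) (G.d_comp p q h1)
  have hd' : G.d p + G.d q = G.d p' + G.d q' := by
    rw [← G.d_comp p q h1, ← G.d_comp p' q' h2, h3]
  have hq : G.d q' = G.d q := by
    rw [h4] at hd'; exact (add_left_cancel hd').symm
  have e1 : ((p, q) : G.Path × G.Path) = mn := huniq (p, q) ⟨rfl, rfl, h1, rfl⟩
  have e2 : ((p', q') : G.Path × G.Path) = mn := huniq (p', q') ⟨h4.symm, hq, h2, h3.symm⟩
  have e := e1.trans e2.symm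
  exact ⟨congrArg Prod.fst e, congrArg Prod.snd e⟩

/-- Existence part of factorisation. -/
lemma exfac {lam : G.Path} (m n : ℕ × ℕ) (h : G.d lam = m + n) :
    ∃ p q, G.d p = m ∧ G.d q = n ∧ G.s p = G.r q ∧ G.comp p q = lam := by
  obtain ⟨⟨p, q⟩, ⟨h1, h2, h3, h4⟩, -⟩ := G.factor lam m n h
  exact ⟨p, q, h1, h2, h3, h4⟩

variable {N : ℕ∞} {V : ℕ → Set G.Path}

lemma red_cycle_deg {lam : G.Path} (hred : G.IsRed lam) (hne : G.d lam ≠ 0) :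
    G.d lam = (0, (G.d lam).2 - 1) + (0, 1) := by
  have h2 : 1 ≤ (G.d lam).2 := by
    rcases Nat.eq_zero_or_pos (G.d lam).2 with h | h
    · exact absurd (Prod.ext (by have h' : (G.d lam).1 = 0 := hred; simpa using h') (by simpa using h)) hne
    · exact h
  have : (G.d lam) = ((G.d lam).1, (G.d lam).2) := rfl
  rw [this, hred, Prod.mk_add_mk]
  simp; omega

lemma exists_red_out (hGBD : IsGBD G N V) {v : G.Path} (hv : G.IsVertex v) :
    ∃ f, G.IsRedEdge f ∧ G.s f = v := by
  obtain ⟨lam, ⟨hred, hcyc, -⟩, hr⟩ := hGBD.red_cycle v hv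
  obtain ⟨ν, f, hdν, hdf, hs, hcomp⟩ :=
    G.exfac (0, (G.d lam).2 - 1) (0, 1) (G.red_cycle_deg hred hcyc.1)
  refine ⟨f, hdf, ?_⟩
  have : G.s lam = G.s f := by rw [← hcomp, G.s_comp _ _ hs]
  rw [← this, ← hcyc.2.1, hr]

lemma exists_red_in (hGBD : IsGBD G N V) {v : G.Path} (hv : G.IsVertex v) :
    ∃ f, G.IsRedEdge f ∧ G.r f = v := by
  obtain ⟨lam, ⟨hred, hcyc, -⟩, hr⟩ := hGBD.red_cycle v hv
  have hd : G.d lam = (0, 1) + (0, (G.d lam).2 - 1) := by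
    rw [add_comm]; exact G.red_cycle_deg hred hcyc.1
  obtain ⟨f, ν, hdf, hdν, hs, hcomp⟩ := G.exfac (0, 1) (0, (G.d lam).2 - 1) hd
  refine ⟨f, hdf, ?_⟩
  have : G.r lam = G.r f := by rw [← hcomp, G.r_comp _ _ hs]
  rw [← this, hr]

lemma red_out_unique (hGBD : IsGBD G N V) {f₁ f₂ : G.Path}
    (h1 : G.IsRedEdge f₁) (h2 : G.IsRedEdge f₂) (hs : G.s f₁ = G.s f₂) : f₁ = f₂ := by
  have hv : G.IsVertex (G.s f₁) := G.d_s f₁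
  obtain ⟨lam, ⟨hred, hcyc, -, hnx⟩, hr⟩ := hGBD.red_cycle _ hv
  have hle : ((0, 1) : ℕ × ℕ) ≤ G.d lam := by
    rw [G.red_cycle_deg hred hcyc.1]; exact le_add_self
  have hsl : G.s lam = G.s f₁ := by rw [← hcyc.2.1, hr]
  obtain ⟨ν₁, hsν₁, hc₁⟩ := hnx (0, 1) hle f₁ h1 hsl.symm
  obtain ⟨ν₂, hsν₂, hc₂⟩ := hnx (0, 1) hle f₂ h2 (hs ▸ hsl.symm)
  have hdν : G.d ν₁ = G.d ν₂ := by
    have e1 : G.d ν₁ + G.d f₁ = G.d lam := by rw [← G.d_comp _ _ hsν₁, hc₁]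
    have e2 : G.d ν₂ + G.d f₂ = G.d lam := by rw [← G.d_comp _ _ hsν₂, hc₂]
    rw [h1] at e1; rw [h2] at e2
    exact add_right_cancel (e1.trans e2.symm)
  exact (G.fu hsν₁ hsν₂ (hc₁.trans hc₂.symm) hdν).2

lemma red_in_unique (hGBD : IsGBD G N V) {f₁ f₂ : G.Path}
    (h1 : G.IsRedEdge f₁) (h2 : G.IsRedEdge f₂) (hr : G.r f₁ = G.r f₂) : f₁ = f₂ := by
  have hv : G.IsVertex (G.r f₁) := G.d_r f₁
  obtain ⟨lam, ⟨hred, hcyc, hne, -⟩, hrl⟩ := hGBD.red_cycle _ hv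
  have hle : ((0, 1) : ℕ × ℕ) ≤ G.d lam := by
    rw [G.red_cycle_deg hred hcyc.1]; exact le_add_self
  obtain ⟨ν₁, hsν₁, hc₁⟩ := hne (0, 1) hle f₁ h1 hrl.symm
  obtain ⟨ν₂, hsν₂, hc₂⟩ := hne (0, 1) hle f₂ h2 (hr ▸ hrl.symm)
  exact (G.fu hsν₁ hsν₂ (hc₁.trans hc₂.symm) (h1.trans h2.symm)).1

lemma isBlue_pair {α : G.Path} (h : G.IsBlue α) : G.d α = ((G.d α).1, 0) :=
  Prod.ext rfl h

lemma FStep_total (hGBD : IsGBD G N V) {α : G.Path} (hb : G.IsBlue α) :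
    ∃ α', G.FStep α α' := by
  obtain ⟨f, hf, hsf⟩ := G.exists_red_out hGBD (G.d_r α)
  have hcd : G.d (G.comp f α) = ((G.d α).1, 0) + (0, 1) := by
    rw [G.d_comp _ _ hsf, hf, ← G.isBlue_pair hb, add_comm]
  obtain ⟨α', f', hdα', hdf', hs', hcomp⟩ := G.exfac _ _ hcd
  exact ⟨α', hb, by simp [IsBlue, hdα'], f, f', hf, hdf', hsf, hs', hcomp.symm⟩

lemma FStep_deg {α α' : G.Path} (h : G.FStep α α') : G.d α' = G.d α := by
  obtain ⟨hbα, hbα', f, f', hf, hf', hsf, hsα', hcomp⟩ := h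
  have hd : G.d α' + G.d f' = G.d f + G.d α := by
    rw [← G.d_comp α' f' hsα', ← G.d_comp f α hsf, hcomp]
  rw [hf, hf'] at hd
  exact add_right_cancel (hd.trans (add_comm _ _))

lemma FStep_fun (hGBD : IsGBD G N V) {α α₁ α₂ : G.Path}
    (h1 : G.FStep α α₁) (h2 : G.FStep α α₂) : α₁ = α₂ := by
  have hd : G.d α₁ = G.d α₂ := (G.FStep_deg h1).trans (G.FStep_deg h2).symm
  obtain ⟨hb, hb1, f₁, f₁', hf₁, hf₁', hs₁, hsα₁, hc₁⟩ := h1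
  obtain ⟨-, hb2, f₂, f₂', hf₂, hf₂', hs₂, hsα₂, hc₂⟩ := h2
  have hf : f₁ = f₂ := G.red_out_unique hGBD hf₁ hf₂ (hs₁.trans hs₂.symm)
  subst hf
  have hc : G.comp α₁ f₁' = G.comp α₂ f₂' := by rw [← hc₁, ← hc₂]
  exact (G.fu hsα₁ hsα₂ hc hd).1

lemma FStep_inj (hGBD : IsGBD G N V) {α₁ α₂ α' : G.Path}
    (h1 : G.FStep α₁ α') (h2 : G.FStep α₂ α') : α₁ = α₂ := by
  obtain ⟨hb1, hb', f₁, f₁', hf₁, hf₁', hs₁, hsα', hc₁⟩ := h1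
  obtain ⟨hb2, -, f₂, f₂', hf₂, hf₂', hs₂, hsα₂', hc₂⟩ := h2
  have hf' : f₁' = f₂' := G.red_in_unique hGBD hf₁' hf₂' (by rw [← hsα', ← hsα₂'])
  subst hf'
  have hc : G.comp f₁ α₁ = G.comp f₂ α₂ := hc₁.trans hc₂.symm
  exact (G.fu hs₁ hs₂ hc (hf₁.trans hf₂.symm)).2

lemma FStep_surj (hGBD : IsGBD G N V) {α' : G.Path} (hb : G.IsBlue α') :
    ∃ α, G.FStep α α' := by
  obtain ⟨f', hf', hrf'⟩ := G.exists_red_in hGBD (G.d_s α')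
  have hs : G.s α' = G.r f' := hrf'.symm
  have hcd : G.d (G.comp α' f') = (0, 1) + ((G.d α').1, 0) := by
    rw [G.d_comp _ _ hs, hf', ← G.isBlue_pair hb, add_comm]
  obtain ⟨f, α, hdf, hdα, hsfα, hcomp⟩ := G.exfac _ _ hcd
  exact ⟨α, by simp [IsBlue, hdα], hb, f, f', hdf, hf', hsfα, hs, hcomp⟩

lemma FIter_conj_fwd (hGBD : IsGBD G N V) :
    ∀ k {x x' y y' : G.Path}, G.FIter k x x' → G.FStep x y → G.FStep x' y' →
      G.FIter k y y' := by
  intro k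
  induction k with
  | zero =>
    intro x x' y y' h hxy hx'y'
    cases h
    exact G.FStep_fun hGBD hxy hx'y'
  | succ k ih =>
    rintro x x' y y' ⟨β, hxβ, hβx'⟩ hxy hx'y'
    have hyβ : y = β := G.FStep_fun hGBD hxy hxβ
    subst hyβ
    obtain ⟨γ, hγ⟩ := G.FStep_total hGBD hxy.2.1
    exact ⟨γ, hγ, ih hβx' hγ hx'y'⟩

lemma FIter_conj_bwd (hGBD : IsGBD G N V) :
    ∀ k {x x' y y' : G.Path}, G.FIter k y y' → G.FStep x y → G.FStep x' y' →
      G.FIter k x x' := by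
  intro k
  induction k with
  | zero =>
    intro x x' y y' h hxy hx'y'
    cases h
    exact G.FStep_inj hGBD hxy hx'y'
  | succ k ih =>
    rintro x x' y y' ⟨γ, hyγ, hγy'⟩ hxy hx'y'
    exact ⟨y, hxy, ih hγy' hyγ hx'y'⟩

lemma HasOrder_FStep (hGBD : IsGBD G N V) {x y : G.Path} (hxy : G.FStep x y) (k : ℕ) :
    G.HasOrder x k ↔ G.HasOrder y k := by
  constructor
  · rintro ⟨hk, hit, hmin⟩
    exact ⟨hk, G.FIter_conj_fwd hGBD k hit hxy hxy,
      fun m hm hmk hmy => hmin m hm hmk (G.FIter_conj_bwd hGBD m hmy hxy hxy)⟩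
  · rintro ⟨hk, hit, hmin⟩
    exact ⟨hk, G.FIter_conj_bwd hGBD k hit hxy hxy,
      fun m hm hmk hmx => hmin m hm hmk (G.FIter_conj_fwd hGBD m hmx hxy hxy)⟩

lemma FIter_total (hGBD : IsGBD G N V) :
    ∀ (k : ℕ) {x : G.Path}, G.IsBlue x → ∃ y, G.FIter k x y ∧ G.IsBlue y := by
  intro k
  induction k with
  | zero => exact fun hx => ⟨_, rfl, hx⟩
  | succ k ih =>
    intro x hx
    obtain ⟨β, hβ⟩ := G.FStep_total hGBD hx
    obtain ⟨y, hy, hby⟩ := ih hβ.2.1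
    exact ⟨y, ⟨β, hβ, hy⟩, hby⟩

lemma FIter_fun (hGBD : IsGBD G N V) :
    ∀ (k : ℕ) {x y₁ y₂ : G.Path}, G.FIter k x y₁ → G.FIter k x y₂ → y₁ = y₂ := by
  intro k
  induction k with
  | zero => intro x y₁ y₂ h1 h2; cases h1; cases h2; rfl
  | succ k ih =>
    rintro x y₁ y₂ ⟨β₁, hβ₁, h1⟩ ⟨β₂, hβ₂, h2⟩
    have : β₁ = β₂ := G.FStep_fun hGBD hβ₁ hβ₂
    subst this
    exact ih h1 h2

lemma FIter_deg : ∀ (k : ℕ) {x y : G.Path}, G.FIter k x y → G.d y = G.d x := by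
  intro k
  induction k with
  | zero => intro x y h; cases h; rfl
  | succ k ih => rintro x y ⟨β, hβ, h⟩; rw [ih h, G.FStep_deg hβ]

lemma FIter_add {a b : ℕ} {x z : G.Path} :
    G.FIter (a + b) x z ↔ ∃ y, G.FIter a x y ∧ G.FIter b y z := by
  induction a generalizing x with
  | zero =>
    simp only [Nat.zero_add]
    constructor
    · exact fun h => ⟨x, rfl, h⟩
    · rintro ⟨y, rfl, h⟩; exact h
  | succ a ih =>
    rw [Nat.succ_add]
    constructor
    · rintro ⟨β, hβ, h⟩
      obtain ⟨y, h1, h2⟩ := ih.1 h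
      exact ⟨y, ⟨β, hβ, h1⟩, h2⟩
    · rintro ⟨y, ⟨β, hβ, h1⟩, h2⟩
      exact ⟨β, hβ, ih.2 ⟨y, h1, h2⟩⟩

lemma FIter_of_dvd {x : G.Path} {o : ℕ} (ho : G.FIter o x x) {m : ℕ} (hd : o ∣ m) :
    G.FIter m x x := by
  obtain ⟨t, rfl⟩ := hd
  induction t with
  | zero => rw [Nat.mul_zero]; rfl
  | succ t ih => rw [Nat.mul_succ]; exact G.FIter_add.2 ⟨x, ih, ho⟩

lemma order_dvd (hGBD : IsGBD G N V) {x : G.Path} {o : ℕ} (ho : G.HasOrder x o) :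
    ∀ m, G.FIter m x x → o ∣ m := by
  intro m
  induction m using Nat.strong_induction_on with
  | _ m ih =>
    intro hm
    rcases Nat.eq_zero_or_pos m with rfl | hpos
    · exact dvd_zero o
    by_cases hlt : m < o
    · exact absurd hm (ho.2.2 m hpos hlt)
    push_neg at hlt
    have hop : 0 < o := ho.1
    have hsplit : o + (m - o) = m := Nat.add_sub_cancel' hlt
    obtain ⟨y, h1, h2⟩ := G.FIter_add.1 (hsplit ▸ hm)
    have hyx : y = x := G.FIter_fun hGBD o h1 ho.2.1
    subst hyx
    have hdvd : o ∣ m - o := ih (m - o) (by omega) h2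
    have : o ∣ o + (m - o) := Dvd.dvd.add (dvd_refl o) hdvd
    rwa [hsplit] at this

lemma FStep_comp (hGBD : IsGBD G N V) {β₁ β₂ γ₁ γ₂ : G.Path} (hs : G.s β₁ = G.r β₂)
    (h1 : G.FStep β₁ γ₁) (h2 : G.FStep β₂ γ₂) :
    G.s γ₁ = G.r γ₂ ∧ G.FStep (G.comp β₁ β₂) (G.comp γ₁ γ₂) := by
  obtain ⟨hb1, hbγ1, f, f₁, hf, hf₁, hsf, hsγ₁, hc₁⟩ := h1
  obtain ⟨hb2, hbγ2, e, f₂, he, hf₂, hse, hsγ₂, hc₂⟩ := h2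
  have hsf₁ : G.s f₁ = G.s β₁ := by
    have h := congrArg G.s hc₁
    rw [G.s_comp _ _ hsf, G.s_comp _ _ hsγ₁] at h
    exact h.symm
  have hef : e = f₁ := G.red_out_unique hGBD he hf₁ (by rw [hse, ← hs, hsf₁])
  subst hef
  have hsγ : G.s γ₁ = G.r γ₂ := by
    rw [hsγ₁]
    have h := congrArg G.r hc₂
    rw [G.r_comp _ _ hse, G.r_comp _ _ hsγ₂] at h
    exact h
  have hbb : G.IsBlue (G.comp β₁ β₂) := by
    show (G.d (G.comp β₁ β₂)).2 = 0
    rw [G.d_comp _ _ hs]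
    show (G.d β₁).2 + (G.d β₂).2 = 0
    have e1 : (G.d β₁).2 = 0 := hb1
    have e2 : (G.d β₂).2 = 0 := hb2
    rw [e1, e2]
  have hbγγ : G.IsBlue (G.comp γ₁ γ₂) := by
    show (G.d (G.comp γ₁ γ₂)).2 = 0
    rw [G.d_comp _ _ hsγ]
    show (G.d γ₁).2 + (G.d γ₂).2 = 0
    have e1 : (G.d γ₁).2 = 0 := hbγ1
    have e2 : (G.d γ₂).2 = 0 := hbγ2
    rw [e1, e2]
  refine ⟨hsγ, hbb, hbγγ, f, f₂, hf, hf₂, ?_, ?_, ?_⟩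
  · rw [G.r_comp _ _ hs]; exact hsf
  · rw [G.s_comp _ _ hsγ]; exact hsγ₂
  · rw [← G.comp_assoc f β₁ β₂ hsf hs, hc₁,
      G.comp_assoc γ₁ e β₂ hsγ₁ (hsf₁.trans hs), hc₂,
      ← G.comp_assoc γ₁ γ₂ f₂ hsγ hsγ₂]

lemma FIter_comp (hGBD : IsGBD G N V) :
    ∀ (k : ℕ) {β₁ β₂ γ₁ γ₂ : G.Path}, G.s β₁ = G.r β₂ →
      G.FIter k β₁ γ₁ → G.FIter k β₂ γ₂ →
      G.s γ₁ = G.r γ₂ ∧ G.FIter k (G.comp β₁ β₂) (G.comp γ₁ γ₂) := by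
  intro k
  induction k with
  | zero =>
    intro β₁ β₂ γ₁ γ₂ hs h1 h2
    cases h1; cases h2; exact ⟨hs, rfl⟩
  | succ k ih =>
    rintro β₁ β₂ γ₁ γ₂ hs ⟨δ₁, hδ₁, h1⟩ ⟨δ₂, hδ₂, h2⟩
    obtain ⟨hsδ, hstep⟩ := G.FStep_comp hGBD hs hδ₁ hδ₂
    obtain ⟨hsγ, hiter⟩ := ih hsδ h1 h2
    exact ⟨hsγ, _, hstep, hiter⟩

lemma HasOrder_comp (hGBD : IsGBD G N V) {β₁ β₂ : G.Path} {k₁ k₂ : ℕ}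
    (hs : G.s β₁ = G.r β₂) (hb1 : G.IsBlue β₁) (hb2 : G.IsBlue β₂)
    (h1 : G.HasOrder β₁ k₁) (h2 : G.HasOrder β₂ k₂) :
    G.HasOrder (G.comp β₁ β₂) (Nat.lcm k₁ k₂) := by
  have hL : 0 < Nat.lcm k₁ k₂ := Nat.lcm_pos h1.1 h2.1
  refine ⟨hL, ?_, ?_⟩
  · exact (G.FIter_comp hGBD _ hs
      (G.FIter_of_dvd h1.2.1 (Nat.dvd_lcm_left k₁ k₂))
      (G.FIter_of_dvd h2.2.1 (Nat.dvd_lcm_right k₁ k₂))).2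
  · intro m hm hmL hit
    obtain ⟨γ₁, hγ₁, hbγ₁⟩ := G.FIter_total hGBD m hb1
    obtain ⟨γ₂, hγ₂, hbγ₂⟩ := G.FIter_total hGBD m hb2
    obtain ⟨hsγ, hiter⟩ := G.FIter_comp hGBD m hs hγ₁ hγ₂
    have heq : G.comp γ₁ γ₂ = G.comp β₁ β₂ := G.FIter_fun hGBD m hiter hit
    have hd : G.d γ₁ = G.d β₁ := G.FIter_deg m hγ₁
    obtain ⟨e1, e2⟩ := G.fu hsγ hs heq hd
    subst e1; subst e2
    have d1 : k₁ ∣ m := G.order_dvd hGBD h1 m hγ₁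
    have d2 : k₂ ∣ m := G.order_dvd hGBD h2 m hγ₂
    have : Nat.lcm k₁ k₂ ∣ m := Nat.lcm_dvd d1 d2
    exact absurd (Nat.le_of_dvd hm this) (by omega)

lemma exists_edge_at {α : G.Path} {a j : ℕ} (h1 : a + 1 ≤ (G.d α).1)
    (h2 : j ≤ (G.d α).2) :
    ∃ x g y, G.d x = (a, j) ∧ G.IsBlueEdge g ∧ G.s x = G.r (G.comp g y) ∧
      G.s g = G.r y ∧ α = G.comp x (G.comp g y) := by
  have hd1 : G.d α = (a, j) + ((G.d α).1 - a, (G.d α).2 - j) := by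
    apply Prod.ext
    · show (G.d α).1 = a + ((G.d α).1 - a); omega
    · show (G.d α).2 = j + ((G.d α).2 - j); omega
  obtain ⟨x, R, hdx, hdR, hsx, hcx⟩ := G.exfac _ _ hd1
  have hd2 : G.d R = (1, 0) + ((G.d α).1 - a - 1, (G.d α).2 - j) := by
    rw [hdR]; apply Prod.ext
    · show (G.d α).1 - a = 1 + ((G.d α).1 - a - 1); omega
    · show (G.d α).2 - j = 0 + ((G.d α).2 - j); omega
  obtain ⟨g, y, hdg, hdy, hsg, hcg⟩ := G.exfac _ _ hd2
  refine ⟨x, g, y, hdx, hdg, ?_, hsg, ?_⟩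
  · rw [hcg]; exact hsx
  · rw [hcg]; exact hcx.symm

lemma FStep_edge_shift {α x₁ g₁ y₁ x₂ g₂ y₂ : G.Path} {a j : ℕ}
    (hd1 : G.d x₁ = (a, j)) (hg1 : G.IsBlueEdge g₁)
    (hs1 : G.s x₁ = G.r (G.comp g₁ y₁)) (hs1' : G.s g₁ = G.r y₁)
    (hα1 : α = G.comp x₁ (G.comp g₁ y₁))
    (hd2 : G.d x₂ = (a, j + 1)) (hg2 : G.IsBlueEdge g₂)
    (hs2 : G.s x₂ = G.r (G.comp g₂ y₂)) (hs2' : G.s g₂ = G.r y₂)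
    (hα2 : α = G.comp x₂ (G.comp g₂ y₂)) :
    G.FStep g₂ g₁ := by
  have hx2d : G.d x₂ = (a, j) + (0, 1) := by
    rw [hd2]; apply Prod.ext
    · show a = a + 0; omega
    · show j + 1 = j + 1; rfl
  obtain ⟨x, f, hdx, hdf, hsxf, hcxf⟩ := G.exfac _ _ hx2d
  have hsf2 : G.s f = G.r (G.comp g₂ y₂) := by
    rw [← hs2, ← hcxf, G.s_comp _ _ hsxf]
  have hα2' : α = G.comp x (G.comp f (G.comp g₂ y₂)) := by
    rw [hα2, ← hcxf, G.comp_assoc x f _ hsxf hsf2]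
  have hsx : G.s x = G.r (G.comp f (G.comp g₂ y₂)) := by
    rw [G.r_comp _ _ hsf2]; exact hsxf
  obtain ⟨hxx, hR⟩ := G.fu hsx hs1 (hα2'.symm.trans hα1) (hdx.trans hd1.symm)
  have hrg2 : G.r (G.comp g₂ y₂) = G.r g₂ := G.r_comp _ _ hs2'
  have hsfg : G.s f = G.r g₂ := by rw [hsf2, hrg2]
  have hdy : G.d y₁ = (0, 1) + G.d y₂ := by
    have e := congrArg G.d hR
    rw [G.d_comp _ _ hsf2, G.d_comp _ _ hs2', G.d_comp _ _ hs1', hdf, hg2, hg1] at e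
    have e1 : 0 + (1 + (G.d y₂).1) = 1 + (G.d y₁).1 := congrArg Prod.fst e
    have e2 : 1 + (0 + (G.d y₂).2) = 0 + (G.d y₁).2 := congrArg Prod.snd e
    apply Prod.ext
    · show (G.d y₁).1 = 0 + (G.d y₂).1; omega
    · show (G.d y₁).2 = 1 + (G.d y₂).2; omega
  obtain ⟨f', y', hdf', hdy', hsf', hcf'⟩ := G.exfac (0, 1) (G.d y₂) hdy
  have hL : G.comp f (G.comp g₂ y₂) = G.comp (G.comp f g₂) y₂ :=
    (G.comp_assoc f g₂ y₂ hsfg hs2').symm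
  have hsg1f' : G.s g₁ = G.r f' := by rw [hs1', ← hcf', G.r_comp _ _ hsf']
  have hRight : G.comp g₁ y₁ = G.comp (G.comp g₁ f') y' := by
    rw [← hcf', ← G.comp_assoc g₁ f' y' hsg1f' hsf']
  have hkey : G.comp f g₂ = G.comp g₁ f' := by
    have hEq : G.comp (G.comp f g₂) y₂ = G.comp (G.comp g₁ f') y' := by
      rw [← hL, hR, hRight]
    have hsA : G.s (G.comp f g₂) = G.r y₂ := by rw [G.s_comp _ _ hsfg]; exact hs2'
    have hsB : G.s (G.comp g₁ f') = G.r y' := by rw [G.s_comp _ _ hsg1f']; exact hsf'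
    have hdAB : G.d (G.comp f g₂) = G.d (G.comp g₁ f') := by
      rw [G.d_comp _ _ hsfg, G.d_comp _ _ hsg1f', hdf, hg2, hg1, hdf', add_comm]
    exact (G.fu hsA hsB hEq hdAB).1
  exact ⟨by show (G.d g₂).2 = 0; rw [hg2], by show (G.d g₁).2 = 0; rw [hg1],
    f, f', hdf, hdf', hsfg, hsg1f', hkey⟩

lemma edge_at_order (hGBD : IsGBD G N V) :
    ∀ (t : ℕ) {α x₁ g₁ y₁ x₂ g₂ y₂ : G.Path} {a j : ℕ},
      G.d x₁ = (a, j) → G.IsBlueEdge g₁ → G.s x₁ = G.r (G.comp g₁ y₁) →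
      G.s g₁ = G.r y₁ → α = G.comp x₁ (G.comp g₁ y₁) →
      G.d x₂ = (a, j + t) → G.IsBlueEdge g₂ → G.s x₂ = G.r (G.comp g₂ y₂) →
      G.s g₂ = G.r y₂ → α = G.comp x₂ (G.comp g₂ y₂) →
      ∀ k, G.HasOrder g₁ k ↔ G.HasOrder g₂ k := by
  intro t
  induction t with
  | zero =>
    intro α x₁ g₁ y₁ x₂ g₂ y₂ a j hd1 hg1 hs1 hs1' hα1 hd2 hg2 hs2 hs2' hα2 k
    obtain ⟨hx, hGG⟩ := G.fu hs1 hs2 (hα1.symm.trans hα2) (hd1.trans hd2.symm)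
    obtain ⟨hg, -⟩ := G.fu hs1' hs2' hGG (by rw [hg1, hg2])
    rw [hg]
  | succ t ih =>
    intro α x₁ g₁ y₁ x₂ g₂ y₂ a j hd1 hg1 hs1 hs1' hα1 hd2 hg2 hs2 hs2' hα2 k
    have hdα : G.d α = (a, j + t + 1) + ((1, 0) + G.d y₂) := by
      rw [hα2, G.d_comp _ _ hs2, G.d_comp _ _ hs2', hd2, hg2]; rfl
    have hb1 : a + 1 ≤ (G.d α).1 := by
      rw [hdα]; show a + 1 ≤ a + (1 + (G.d y₂).1); omega
    have hb2 : j + t ≤ (G.d α).2 := by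
      rw [hdα]; show j + t ≤ (j + t + 1) + (0 + (G.d y₂).2); omega
    obtain ⟨x, g, y, hdx, hgg, hsx, hsg, hαx⟩ := G.exists_edge_at hb1 hb2
    have step1 := ih hd1 hg1 hs1 hs1' hα1 hdx hgg hsx hsg hαx
    have step2 : G.FStep g₂ g :=
      G.FStep_edge_shift hdx hgg hsx hsg hαx hd2 hg2 hs2 hs2' hα2
    rw [step1 k]
    exact (G.HasOrder_FStep hGBD step2 k).symm

lemma chain_blue : ∀ (l : List G.Path) (β : G.Path), (∀ e ∈ l, G.IsBlueEdge e) →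
    G.IsChainComp l β → G.IsBlue β := by
  intro l
  induction l with
  | nil =>
    intro β _ hch
    show (G.d β).2 = 0
    have hv : G.d β = 0 := hch
    rw [hv]; rfl
  | cons e l ih =>
    rintro β hall ⟨γ, hch, hse, rfl⟩
    have hbe : (G.d e).2 = 0 := by rw [hall e List.mem_cons_self]
    have hbγ : (G.d γ).2 = 0 := ih γ (fun x hx => hall x (List.mem_cons_of_mem e hx)) hch
    show (G.d (G.comp e γ)).2 = 0
    rw [G.d_comp _ _ hse]
    show (G.d e).2 + (G.d γ).2 = 0
    rw [hbe, hbγ]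

end TwoGraph

/-- (1) The order of the blue edge occurring at a fixed horizontal
position in two factorisations of the same path is the same.
(2) The order of a blue path is the lcm of the orders of its edges. -/
theorem stmt12 (G : TwoGraph) (N : ℕ∞) (V : ℕ → Set G.Path) (hGBD : IsGBD G N V) :
    (∀ (α μ g ν β h γ : G.Path), G.IsBlueEdge g → G.IsBlueEdge h →
      G.s μ = G.r g → G.s g = G.r ν → α = G.comp μ (G.comp g ν) →
      G.s β = G.r h → G.s h = G.r γ → α = G.comp β (G.comp h γ) →
      (G.d μ).1 = (G.d β).1 →
      ∀ k, G.HasOrder g k ↔ G.HasOrder h k) ∧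
    (∀ (l : List G.Path) (β : G.Path) (ks : List ℕ), l ≠ [] →
      (∀ e ∈ l, G.IsBlueEdge e) → G.IsChainComp l β →
      List.Forall₂ (fun e k => G.HasOrder e k) l ks →
      G.HasOrder β (ks.foldr Nat.lcm 1)) := by
  constructor
  · intro α μ g ν β h γ hg hh hsμ hsg hα1 hsβ hsh hα2 hfst k
    have hsμ' : G.s μ = G.r (G.comp g ν) := by rw [G.r_comp _ _ hsg]; exact hsμ
    have hsβ' : G.s β = G.r (G.comp h γ) := by rw [G.r_comp _ _ hsh]; exact hsβ
    have hdμ : G.d μ = ((G.d μ).1, (G.d μ).2) := rfl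
    rcases le_total (G.d μ).2 (G.d β).2 with hle | hle
    · have hdβ : G.d β = ((G.d μ).1, (G.d μ).2 + ((G.d β).2 - (G.d μ).2)) := by
        apply Prod.ext
        · exact hfst.symm
        · show (G.d β).2 = (G.d μ).2 + ((G.d β).2 - (G.d μ).2); omega
      exact G.edge_at_order hGBD ((G.d β).2 - (G.d μ).2) hdμ hg hsμ' hsg hα1
        hdβ hh hsβ' hsh hα2 k
    · have hdβ : G.d β = ((G.d β).1, (G.d β).2) := rfl
      have hdμ' : G.d μ = ((G.d β).1, (G.d β).2 + ((G.d μ).2 - (G.d β).2)) := by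
        apply Prod.ext
        · exact hfst
        · show (G.d μ).2 = (G.d β).2 + ((G.d μ).2 - (G.d β).2); omega
      exact (G.edge_at_order hGBD ((G.d μ).2 - (G.d β).2) hdβ hh hsβ' hsh hα2
        hdμ' hg hsμ' hsg hα1 k).symm
  · intro l
    induction l with
    | nil => intro β ks hne; exact absurd rfl hne
    | cons e l ih =>
      intro β ks hne hall hch hf2
      obtain ⟨γ, hchγ, hse, rfl⟩ := hch
      obtain ⟨k, ks', hk, hks, rfl⟩ := List.forall₂_cons_left_iff.1 hf2
      rcases l with _ | ⟨e', l'⟩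
      · cases hks
        have hγv : G.IsVertex γ := hchγ
        have hγ2 : G.r γ = γ := G.r_vertex γ hγv
        have hγe : γ = G.s e := (hse.trans hγ2).symm
        have hβ : G.comp e γ = e := by rw [hγe, G.comp_id]
        rw [hβ]
        show G.HasOrder e (Nat.lcm k (List.foldr Nat.lcm 1 []))
        rw [show List.foldr Nat.lcm 1 ([] : List ℕ) = 1 from rfl, Nat.lcm_one_right]
        exact hk
      · have halltail : ∀ x ∈ e' :: l', G.IsBlueEdge x :=
          fun x hx => hall x (List.mem_cons_of_mem e hx)
        have hordγ := ih γ ks' (List.cons_ne_nil e' l') halltail hchγ hks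
        have hbe : G.IsBlue e := by show (G.d e).2 = 0; rw [hall e List.mem_cons_self]
        have hbγ : G.IsBlue γ := G.chain_blue _ γ halltail hchγ
        exact G.HasOrder_comp hGBD hse hbe hbγ hk hordγ
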